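/- Let C1, C2 be real numbers with 0 < C1 ≤ 1 and 0 < C2 ≤ 1, let m, n be natural numbers with 1 ≤ m < n, and let (s_m, t_m) and (s_n, t_n) be the SimRank iterates on K_{m,2} and K_{n,2} respectively (s_m 0 = t_m 0 = 0, s_m (k+1) = C2·(1 + (m-1)·t_m k)/m, t_m (k+1) = (C1/2)·(1 + s_m k), and analogously with n in place of m). Then the sequences s_m and s_n converge to limits L_m and L_n respectively, and L_m = L_n if and only if C1 = 1 and C2 = 1. -/

import Mathlib

open Filter

private lemma simrank_aux (C1 C2 : ℝ) (hC1 : 0 < C1) (hC1' : C1 ≤ 1) (hC2 : 0 < C2)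
    (hC2' : C2 ≤ 1) (m : ℕ) (hm : 1 ≤ m) (s t : ℕ → ℝ)
    (hs : ∀ k, s (k + 1) = C2 * (1 + ((m : ℝ) - 1) * t k) / m)
    (ht : ∀ k, t (k + 1) = (C1 / 2) * (1 + s k)) :
    Tendsto s atTop
      (nhds (C2 * (2 + ((m:ℝ) - 1) * C1) / (2 * m - ((m:ℝ) - 1) * C1 * C2))) := by
  have hm1 : (1:ℝ) ≤ m := by exact_mod_cast hm
  have hmpos : (0:ℝ) < m := by linarith
  have hmne : (m:ℝ) ≠ 0 := ne_of_gt hmpos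
  have hcc : C1 * C2 ≤ 1 := mul_le_one₀ hC1' hC2.le hC2'
  have hDpos : 0 < 2 * (m:ℝ) - ((m:ℝ) - 1) * C1 * C2 := by
    nlinarith [mul_nonneg (sub_nonneg.mpr hm1) (sub_nonneg.mpr hcc)]
  have hDne : 2 * (m:ℝ) - ((m:ℝ) - 1) * C1 * C2 ≠ 0 := ne_of_gt hDpos
  set L : ℝ := C2 * (2 + ((m:ℝ) - 1) * C1) / (2 * m - ((m:ℝ) - 1) * C1 * C2) with hL
  set T : ℝ := (C1 / 2) * (1 + L) with hT
  have key1 : ∀ k, s (k + 1) - L = (C2 * ((m:ℝ) - 1) / m) * (t k - T) := by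
    intro k
    rw [hs k, hT, hL]
    rw [div_sub_div _ _ hmne hDne, one_add_div hDne, mul_div_assoc', sub_div' (hc := by simp [hDne]), div_mul_div_comm, div_eq_div_iff (by simp [hmne, hDne]) (by simp [hmne, hDne])]
    ring
  have key2 : ∀ k, t (k + 1) - T = (C1 / 2) * (s k - L) := by
    intro k
    rw [ht k, hT]
    ring
  set r : ℝ := max (((m:ℝ) - 1) / m) (1 / 2) with hr
  have hr0 : (0:ℝ) ≤ r := le_trans (by norm_num) (le_max_right _ _)
  have hr1 : r < 1 := by
    apply max_lt
    · rw [div_lt_one hmpos]; linarith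
    · norm_num
  have hx : (0:ℝ) ≤ ((m:ℝ) - 1) / m := div_nonneg (by linarith) hmpos.le
  have hcoef1 : C2 * ((m:ℝ) - 1) / m ≤ r := by
    rw [mul_div_assoc]
    exact le_trans (mul_le_of_le_one_left hx hC2') (le_max_left _ _)
  have hcoef1' : 0 ≤ C2 * ((m:ℝ) - 1) / m :=
    div_nonneg (mul_nonneg hC2.le (by linarith)) hmpos.le
  have hcoef2 : C1 / 2 ≤ r := le_trans (by linarith) (le_max_right _ _)
  have hcoef2' : 0 ≤ C1 / 2 := by positivity
  set B : ℝ := |s 0 - L| + |t 0 - T| with hB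
  have hBnn : 0 ≤ B := by positivity
  have bound : ∀ k, |s k - L| + |t k - T| ≤ B * r ^ k := by
    intro k
    induction k with
    | zero => simp [hB]
    | succ k ih =>
      have h1 : |s (k + 1) - L| ≤ r * |t k - T| := by
        rw [key1 k, abs_mul, abs_of_nonneg hcoef1']
        exact mul_le_mul_of_nonneg_right hcoef1 (abs_nonneg _)
      have h2 : |t (k + 1) - T| ≤ r * |s k - L| := by
        rw [key2 k, abs_mul, abs_of_nonneg hcoef2']
        exact mul_le_mul_of_nonneg_right hcoef2 (abs_nonneg _)
      have h3 : r * (|s k - L| + |t k - T|) ≤ r * (B * r ^ k) :=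
        mul_le_mul_of_nonneg_left ih hr0
      calc |s (k + 1) - L| + |t (k + 1) - T| ≤ r * (|s k - L| + |t k - T|) := by linarith
        _ ≤ r * (B * r ^ k) := h3
        _ = B * r ^ (k + 1) := by ring
  have htend0 : Tendsto (fun k => B * r ^ k) atTop (nhds 0) := by
    have := tendsto_pow_atTop_nhds_zero_of_lt_one hr0 hr1
    simpa using this.const_mul B
  have habs : Tendsto (fun k => |s k - L|) atTop (nhds 0) := by
    apply squeeze_zero (fun k => abs_nonneg _) (fun k => ?_) htend0
    have := bound k
    have := abs_nonneg (t k - T)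
    linarith
  have : Tendsto (fun k => s k - L) atTop (nhds 0) := by
    exact tendsto_zero_iff_abs_tendsto_zero _ |>.mpr habs
  have := this.add_const L
  simpa using this

theorem simrank_Km2_Kn2_limits_eq_iff
    (C1 C2 : ℝ) (hC1 : 0 < C1) (hC1' : C1 ≤ 1) (hC2 : 0 < C2) (hC2' : C2 ≤ 1)
    (m n : ℕ) (hm : 1 ≤ m) (hmn : m < n)
    (sm tm sn tn : ℕ → ℝ)
    (hsm0 : sm 0 = 0) (htm0 : tm 0 = 0)
    (hsm : ∀ k, sm (k + 1) = C2 * (1 + ((m : ℝ) - 1) * tm k) / m)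
    (htm : ∀ k, tm (k + 1) = (C1 / 2) * (1 + sm k))
    (hsn0 : sn 0 = 0) (htn0 : tn 0 = 0)
    (hsn : ∀ k, sn (k + 1) = C2 * (1 + ((n : ℝ) - 1) * tn k) / n)
    (htn : ∀ k, tn (k + 1) = (C1 / 2) * (1 + sn k)) :
    ∃ Lm Ln : ℝ,
      Filter.Tendsto sm Filter.atTop (nhds Lm) ∧
      Filter.Tendsto sn Filter.atTop (nhds Ln) ∧
      (Lm = Ln ↔ (C1 = 1 ∧ C2 = 1)) := by
  have hn : 1 ≤ n := le_trans hm (le_of_lt hmn)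
  have hm1 : (1:ℝ) ≤ m := by exact_mod_cast hm
  have hn1 : (1:ℝ) ≤ n := by exact_mod_cast hn
  have hmn' : (m:ℝ) < n := by exact_mod_cast hmn
  have hcc : C1 * C2 ≤ 1 := mul_le_one₀ hC1' hC2.le hC2'
  have hDm : 0 < 2 * (m:ℝ) - ((m:ℝ) - 1) * C1 * C2 := by
    nlinarith [mul_nonneg (sub_nonneg.mpr hm1) (sub_nonneg.mpr hcc)]
  have hDn : 0 < 2 * (n:ℝ) - ((n:ℝ) - 1) * C1 * C2 := by
    nlinarith [mul_nonneg (sub_nonneg.mpr hn1) (sub_nonneg.mpr hcc)]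
  refine ⟨C2 * (2 + ((m:ℝ) - 1) * C1) / (2 * m - ((m:ℝ) - 1) * C1 * C2),
    C2 * (2 + ((n:ℝ) - 1) * C1) / (2 * n - ((n:ℝ) - 1) * C1 * C2),
    simrank_aux C1 C2 hC1 hC1' hC2 hC2' m hm sm tm hsm htm,
    simrank_aux C1 C2 hC1 hC1' hC2 hC2' n hn sn tn hsn htn, ?_⟩
  constructor
  · intro hEq
    rw [div_eq_div_iff (ne_of_gt hDm) (ne_of_gt hDn)] at hEq
    have hfac : (2 * C2 * ((n:ℝ) - m)) * (2 - C1 - C1 * C2) = 0 := by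
      linear_combination hEq
    have hpos : 0 < 2 * C2 * ((n:ℝ) - m) := by nlinarith
    have h3 : 2 - C1 - C1 * C2 = 0 :=
      (mul_eq_zero.mp hfac).resolve_left (ne_of_gt hpos)
    have hC1eq : C1 = 1 := le_antisymm hC1' (by nlinarith)
    refine ⟨hC1eq, ?_⟩
    rw [hC1eq] at h3; linarith
  · rintro ⟨rfl, rfl⟩
    rw [div_eq_div_iff (ne_of_gt hDm) (ne_of_gt hDn)]
    ring
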